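/- arXiv:1709.05557 — 3 statements merged into one kernel-verified Lean document; each statement's English description precedes it below -/
import Mathlib

section
/- Let τ range over a finite index set, and let h_τ > 0, s_τ > 0, s'_τ > 0 be real numbers. Set ỹ = ∑_τ h_τ · s'_τ. Then −log(∑_τ h_τ · s_τ) ≤ −∑_τ (h_τ · s'_τ / ỹ) · log(s_τ) − ∑_τ (h_τ · s'_τ / ỹ) · log(ỹ / s'_τ), with equality when s_τ = s'_τ for all τ. (Paper's inequality (21), obtained from Jensen's inequality applied to the convex function −log.) -/
open Finset Real

/-- Paper's inequality (21): for positive `h τ`, `s τ`, `s' τ` and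
`ỹ = ∑ τ, h τ * s' τ`, one has
`−log (∑ τ, h τ * s τ) ≤ −∑ τ (h τ s' τ / ỹ) log (s τ) − ∑ τ (h τ s' τ / ỹ) log (ỹ / s' τ)`,
with equality when `s = s'`.  (Obtained from Jensen's inequality applied to `−log`.) -/
theorem neg_log_sum_jensen_bound {ι : Type*} (I : Finset ι)
    (h s s' : ι → ℝ)
    (hh : ∀ τ ∈ I, 0 < h τ)
    (hs : ∀ τ ∈ I, 0 < s τ)
    (hs' : ∀ τ ∈ I, 0 < s' τ) :
    (-Real.log (∑ τ ∈ I, h τ * s τ) ≤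
      -(∑ τ ∈ I, (h τ * s' τ / (∑ τ' ∈ I, h τ' * s' τ')) * Real.log (s τ))
      - ∑ τ ∈ I, (h τ * s' τ / (∑ τ' ∈ I, h τ' * s' τ')) *
          Real.log ((∑ τ' ∈ I, h τ' * s' τ') / s' τ)) ∧
    ((∀ τ ∈ I, s τ = s' τ) →
      -Real.log (∑ τ ∈ I, h τ * s τ) =
        -(∑ τ ∈ I, (h τ * s' τ / (∑ τ' ∈ I, h τ' * s' τ')) * Real.log (s τ))
        - ∑ τ ∈ I, (h τ * s' τ / (∑ τ' ∈ I, h τ' * s' τ')) *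
            Real.log ((∑ τ' ∈ I, h τ' * s' τ') / s' τ)) := by
  rcases I.eq_empty_or_nonempty with rfl | hne
  · simp
  set Y := ∑ τ' ∈ I, h τ' * s' τ' with hY
  have hYpos : 0 < Y := Finset.sum_pos (fun τ hτ => mul_pos (hh τ hτ) (hs' τ hτ)) hne
  set w : ι → ℝ := fun τ => h τ * s' τ / Y with hw
  have hw0 : ∀ τ ∈ I, 0 ≤ w τ := fun τ hτ =>
    div_nonneg (mul_pos (hh τ hτ) (hs' τ hτ)).le hYpos.le
  have hw1 : ∑ τ ∈ I, w τ = 1 := by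
    rw [← Finset.sum_div, ← hY, div_self hYpos.ne']
  set p : ι → ℝ := fun τ => s τ * Y / s' τ with hp
  have hpmem : ∀ τ ∈ I, p τ ∈ Set.Ioi (0 : ℝ) := fun τ hτ =>
    div_pos (mul_pos (hs τ hτ) hYpos) (hs' τ hτ)
  have jensen := strictConcaveOn_log_Ioi.concaveOn.le_map_sum hw0 hw1 hpmem
  have hwp : ∑ τ ∈ I, w τ • p τ = ∑ τ ∈ I, h τ * s τ := by
    apply Finset.sum_congr rfl
    intro τ hτ
    have h1 := (hs' τ hτ).ne'
    have h2 := hYpos.ne'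
    show h τ * s' τ / Y * (s τ * Y / s' τ) = h τ * s τ
    field_simp
  have hlogsplit : ∀ τ ∈ I, Real.log (p τ) = Real.log (s τ) + Real.log (Y / s' τ) := by
    intro τ hτ
    show Real.log (s τ * Y / s' τ) = _
    rw [mul_div_assoc, Real.log_mul (hs τ hτ).ne' (div_pos hYpos (hs' τ hτ)).ne']
  have key : ∑ τ ∈ I, w τ * Real.log (p τ)
      = (∑ τ ∈ I, w τ * Real.log (s τ)) + ∑ τ ∈ I, w τ * Real.log (Y / s' τ) := by
    rw [← Finset.sum_add_distrib]
    exact Finset.sum_congr rfl fun τ hτ => by rw [hlogsplit τ hτ, mul_add]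
  constructor
  · have := jensen
    rw [hwp] at this
    simp only [smul_eq_mul] at this
    rw [key] at this
    linarith
  · intro heq
    have hps : ∑ τ ∈ I, h τ * s τ = Y := by
      rw [hY]; exact Finset.sum_congr rfl fun τ hτ => by rw [heq τ hτ]
    have hpY : ∀ τ ∈ I, p τ = Y := by
      intro τ hτ
      show s τ * Y / s' τ = Y
      rw [heq τ hτ, mul_comm, mul_div_assoc, div_self (hs' τ hτ).ne', mul_one]
    have : ∑ τ ∈ I, w τ * Real.log (p τ) = Real.log Y := by
      calc ∑ τ ∈ I, w τ * Real.log (p τ) = ∑ τ ∈ I, w τ * Real.log Y :=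
            Finset.sum_congr rfl fun τ hτ => by rw [hpY τ hτ]
        _ = Real.log Y := by rw [← Finset.sum_mul, hw1, one_mul]
    rw [key] at this
    rw [hps]
    linarith
end

section
/- Fix 0 < ρ < 1, λ ≥ 0, finite index sets for k, t, τ, strictly positive data y(k,t), strictly positive fixed parameters h(k,τ), strictly positive s̃(k,t), and strictly positive current iterate s⁰(k,t) (with the zero-padding convention s(k,t) = 0 for t outside the time range, and all convolution sums ỹ(k,t) = ∑_τ h(k,τ)·s⁰(k,t−τ) assumed strictly positive). Define L₂(s) = ρ·∑_{k,t} ( s(k,t)·log(s(k,t)/s̃(k,t)) − s(k,t) ) + (1−ρ)·∑_{k,t} ( λ·s(k,t) + ∑_τ h(k,τ)·s(k,t−τ) ) − (1−ρ)·∑_{k,t} y(k,t)·log(∑_τ h(k,τ)·s(k,t−τ)), and define G(s,s⁰) = ρ·∑_{k,t} ( s(k,t)·log(s(k,t)/s̃(k,t)) − s(k,t) ) + (1−ρ)·∑_{k,t} ( λ·s(k,t) + ∑_τ h(k,τ)·s(k,t−τ) ) − (1−ρ)·∑_{k,t,τ} ( y(k,t)·h(k,τ)·s⁰(k,t−τ)/ỹ(k,t)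 )·log(s(k,t−τ)) − (1−ρ)·∑_{k,t,τ} ( y(k,t)·h(k,τ)·s⁰(k,t−τ)/ỹ(k,t) )·log(ỹ(k,t)/s⁰(k,t−τ)). Then G is an auxiliary function for L₂: G(s,s⁰) ≥ L₂(s) for all strictly positive s, and G(s,s) = L₂(s). -/
open Finset Real
lemma jensen_aux {ι : Type*} (S : Finset ι) (a b : ι → ℝ)
    (ha : ∀ i ∈ S, 0 ≤ a i) (hb : ∀ i ∈ S, 0 ≤ b i)
    (hzero : ∀ i ∈ S, (a i = 0 ↔ b i = 0))
    (hA : 0 < ∑ i ∈ S, a i) :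
    ∑ i ∈ S, (a i / (∑ j ∈ S, a j)) * Real.log (b i * (∑ j ∈ S, a j) / a i)
      ≤ Real.log (∑ i ∈ S, b i) := by
  set A := ∑ j ∈ S, a j with hAdef
  have hex : ∃ i ∈ S, 0 < a i := by
    by_contra hcon
    push_neg at hcon
    have : A ≤ 0 := Finset.sum_nonpos hcon
    linarith
  obtain ⟨i0, hi0, hai0⟩ := hex
  have hB : 0 < ∑ i ∈ S, b i := by
    apply Finset.sum_pos' hb
    exact ⟨i0, hi0, lt_of_le_of_ne (hb i0 hi0)
      (fun h0 => hai0.ne' ((hzero i0 hi0).mpr h0.symm))⟩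
  set B := ∑ i ∈ S, b i with hBdef
  have key : ∀ i ∈ S, (a i / A) * Real.log (b i * A / a i)
      ≤ b i / B - a i / A + (a i / A) * Real.log B := by
    intro i hi
    rcases eq_or_lt_of_le (ha i hi) with h0 | hpos
    · have hb0 : b i = 0 := (hzero i hi).mp h0.symm
      simp [← h0, hb0]
    · have hbpos : 0 < b i := lt_of_le_of_ne (hb i hi)
        (fun h0 => hpos.ne' ((hzero i hi).mpr h0.symm))
      have hx : 0 < b i * A / (a i * B) := by positivity
      have hsplit : b i * A / a i = (b i * A / (a i * B)) * B := by
        field_simp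
      have hlog : Real.log (b i * A / a i)
          = Real.log (b i * A / (a i * B)) + Real.log B := by
        rw [hsplit, Real.log_mul hx.ne' hB.ne']
      have hle := Real.log_le_sub_one_of_pos hx
      have h1 : (a i / A) * (b i * A / (a i * B)) = b i / B := by
        field_simp
      have hcoef : 0 ≤ a i / A := by positivity
      calc (a i / A) * Real.log (b i * A / a i)
          = (a i / A) * Real.log (b i * A / (a i * B)) + (a i / A) * Real.log B := by
            rw [hlog]; ring
        _ ≤ (a i / A) * (b i * A / (a i * B) - 1) + (a i / A) * Real.log B := by
            have := mul_le_mul_of_nonneg_left hle hcoef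
            linarith
        _ = b i / B - a i / A + (a i / A) * Real.log B := by
            rw [mul_sub, h1]; ring
  calc ∑ i ∈ S, (a i / A) * Real.log (b i * A / a i)
      ≤ ∑ i ∈ S, (b i / B - a i / A + (a i / A) * Real.log B) :=
        Finset.sum_le_sum key
    _ = Real.log B := by
        rw [Finset.sum_add_distrib, Finset.sum_sub_distrib, ← Finset.sum_div,
          ← Finset.sum_div, ← Finset.sum_mul, ← Finset.sum_div, ← hAdef, ← hBdef,
          div_self hA.ne', div_self hB.ne']
        ring


/-- `G` is an auxiliary function for the weighted-method cost `L₂` (paper, proof of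
Theorem 1): `G s s⁰ ≥ L₂ s` for every strictly positive (zero-padded) `s`, and
`G s s = L₂ s`.  Time indices range over a finite set `Tset ⊆ ℤ`, filter taps over
`Tauset ⊆ ℤ`, and the zero-padding convention `s k t = 0` for `t ∉ Tset` makes the
out-of-range convolution terms vanish. -/
theorem weighted_method_auxiliary_function {κ : Type*} (Kset : Finset κ)
    (Tset Tauset : Finset ℤ)
    (ρ lam : ℝ) (hρ0 : 0 < ρ) (hρ1 : ρ < 1) (hlam : 0 ≤ lam)
    (y h st s0 : κ → ℤ → ℝ)
    (hy : ∀ k ∈ Kset, ∀ t ∈ Tset, 0 < y k t)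
    (hh : ∀ k ∈ Kset, ∀ τ ∈ Tauset, 0 < h k τ)
    (hst : ∀ k ∈ Kset, ∀ t ∈ Tset, 0 < st k t)
    (hs0pos : ∀ k ∈ Kset, ∀ t ∈ Tset, 0 < s0 k t)
    (hs0pad : ∀ k, ∀ t : ℤ, t ∉ Tset → s0 k t = 0)
    (hs0conv : ∀ k ∈ Kset, ∀ t ∈ Tset, 0 < ∑ τ ∈ Tauset, h k τ * s0 k (t - τ))
    (L₂ : (κ → ℤ → ℝ) → ℝ)
    (hL₂ : ∀ s : κ → ℤ → ℝ, L₂ s =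
      ρ * ∑ k ∈ Kset, ∑ t ∈ Tset, (s k t * Real.log (s k t / st k t) - s k t)
      + (1 - ρ) * ∑ k ∈ Kset, ∑ t ∈ Tset,
          (lam * s k t + ∑ τ ∈ Tauset, h k τ * s k (t - τ))
      - (1 - ρ) * ∑ k ∈ Kset, ∑ t ∈ Tset,
          y k t * Real.log (∑ τ ∈ Tauset, h k τ * s k (t - τ)))
    (G : (κ → ℤ → ℝ) → (κ → ℤ → ℝ) → ℝ)
    (hG : ∀ s s' : κ → ℤ → ℝ, G s s' =
      ρ * ∑ k ∈ Kset, ∑ t ∈ Tset, (s k t * Real.log (s k t / st k t) - s k t)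
      + (1 - ρ) * ∑ k ∈ Kset, ∑ t ∈ Tset,
          (lam * s k t + ∑ τ ∈ Tauset, h k τ * s k (t - τ))
      - (1 - ρ) * ∑ k ∈ Kset, ∑ t ∈ Tset, ∑ τ ∈ Tauset,
          (y k t * h k τ * s' k (t - τ) / (∑ τ' ∈ Tauset, h k τ' * s' k (t - τ'))) *
            Real.log (s k (t - τ))
      - (1 - ρ) * ∑ k ∈ Kset, ∑ t ∈ Tset, ∑ τ ∈ Tauset,
          (y k t * h k τ * s' k (t - τ) / (∑ τ' ∈ Tauset, h k τ' * s' k (t - τ'))) *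
            Real.log ((∑ τ' ∈ Tauset, h k τ' * s' k (t - τ')) / s' k (t - τ))) :
    (∀ s : κ → ℤ → ℝ,
        (∀ k ∈ Kset, ∀ t ∈ Tset, 0 < s k t) →
        (∀ k, ∀ t : ℤ, t ∉ Tset → s k t = 0) →
        G s s0 ≥ L₂ s) ∧
    (∀ s : κ → ℤ → ℝ,
        (∀ k ∈ Kset, ∀ t ∈ Tset, 0 < s k t) →
        (∀ k, ∀ t : ℤ, t ∉ Tset → s k t = 0) →
        (∀ k ∈ Kset, ∀ t ∈ Tset, 0 < ∑ τ ∈ Tauset, h k τ * s k (t - τ)) →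
        G s s = L₂ s) := by
  have hc : (0:ℝ) < 1 - ρ := by linarith
  constructor
  · intro s hs hspad
    rw [hG, hL₂]
    have hkey : ∀ k ∈ Kset, ∀ t ∈ Tset,
        (∑ τ ∈ Tauset,
          (y k t * h k τ * s0 k (t - τ) / (∑ τ' ∈ Tauset, h k τ' * s0 k (t - τ'))) *
            Real.log (s k (t - τ)))
        + (∑ τ ∈ Tauset,
          (y k t * h k τ * s0 k (t - τ) / (∑ τ' ∈ Tauset, h k τ' * s0 k (t - τ'))) *
            Real.log ((∑ τ' ∈ Tauset, h k τ' * s0 k (t - τ')) / s0 k (t - τ)))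
        ≤ y k t * Real.log (∑ τ ∈ Tauset, h k τ * s k (t - τ)) := by
      intro k hk t ht
      have hA := hs0conv k hk t ht
      have step1 : (∑ τ ∈ Tauset,
          (y k t * h k τ * s0 k (t - τ) / (∑ τ' ∈ Tauset, h k τ' * s0 k (t - τ'))) *
            Real.log (s k (t - τ)))
        + (∑ τ ∈ Tauset,
          (y k t * h k τ * s0 k (t - τ) / (∑ τ' ∈ Tauset, h k τ' * s0 k (t - τ'))) *
            Real.log ((∑ τ' ∈ Tauset, h k τ' * s0 k (t - τ')) / s0 k (t - τ)))
        = y k t * ∑ τ ∈ Tauset,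
            ((h k τ * s0 k (t - τ)) / (∑ τ' ∈ Tauset, h k τ' * s0 k (t - τ'))) *
            Real.log ((h k τ * s k (t - τ)) * (∑ τ' ∈ Tauset, h k τ' * s0 k (t - τ'))
              / (h k τ * s0 k (t - τ))) := by
        rw [Finset.mul_sum, ← Finset.sum_add_distrib]
        apply Finset.sum_congr rfl
        intro τ hτ
        by_cases hmem : t - τ ∈ Tset
        · have hs0p := hs0pos k hk _ hmem
          have hsp := hs k hk _ hmem
          have hhp := hh k hk τ hτ
          have heq : (h k τ * s k (t - τ)) * (∑ τ' ∈ Tauset, h k τ' * s0 k (t - τ'))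
              / (h k τ * s0 k (t - τ))
              = s k (t - τ) * ((∑ τ' ∈ Tauset, h k τ' * s0 k (t - τ')) / s0 k (t - τ)) := by
            field_simp
          rw [heq, Real.log_mul hsp.ne' (by positivity)]
          ring
        · simp [hs0pad k _ hmem, hspad k _ hmem]
      rw [step1]
      apply mul_le_mul_of_nonneg_left _ (hy k hk t ht).le
      exact jensen_aux Tauset (fun τ => h k τ * s0 k (t - τ)) (fun τ => h k τ * s k (t - τ))
        (fun τ hτ => by
          by_cases hmem : t - τ ∈ Tset
          · exact (mul_pos (hh k hk τ hτ) (hs0pos k hk _ hmem)).le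
          · simp [hs0pad k _ hmem])
        (fun τ hτ => by
          by_cases hmem : t - τ ∈ Tset
          · exact (mul_pos (hh k hk τ hτ) (hs k hk _ hmem)).le
          · simp [hspad k _ hmem])
        (fun τ hτ => by
          by_cases hmem : t - τ ∈ Tset
          · simp [mul_eq_zero, (hh k hk τ hτ).ne', (hs0pos k hk _ hmem).ne',
              (hs k hk _ hmem).ne']
          · simp [hs0pad k _ hmem, hspad k _ hmem])
        hA
    have hmain : (∑ k ∈ Kset, ∑ t ∈ Tset, ∑ τ ∈ Tauset,
          (y k t * h k τ * s0 k (t - τ) / (∑ τ' ∈ Tauset, h k τ' * s0 k (t - τ'))) *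
            Real.log (s k (t - τ)))
        + (∑ k ∈ Kset, ∑ t ∈ Tset, ∑ τ ∈ Tauset,
          (y k t * h k τ * s0 k (t - τ) / (∑ τ' ∈ Tauset, h k τ' * s0 k (t - τ'))) *
            Real.log ((∑ τ' ∈ Tauset, h k τ' * s0 k (t - τ')) / s0 k (t - τ)))
        ≤ ∑ k ∈ Kset, ∑ t ∈ Tset,
            y k t * Real.log (∑ τ ∈ Tauset, h k τ * s k (t - τ)) := by
      rw [← Finset.sum_add_distrib]
      apply Finset.sum_le_sum
      intro k hk
      rw [← Finset.sum_add_distrib]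
      exact Finset.sum_le_sum (fun t ht => hkey k hk t ht)
    have hfin := mul_le_mul_of_nonneg_left hmain hc.le
    rw [mul_add] at hfin
    linarith
  · intro s hs hspad hconv
    rw [hG, hL₂]
    have hkey : ∀ k ∈ Kset, ∀ t ∈ Tset,
        (∑ τ ∈ Tauset,
          (y k t * h k τ * s k (t - τ) / (∑ τ' ∈ Tauset, h k τ' * s k (t - τ'))) *
            Real.log (s k (t - τ)))
        + (∑ τ ∈ Tauset,
          (y k t * h k τ * s k (t - τ) / (∑ τ' ∈ Tauset, h k τ' * s k (t - τ'))) *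
            Real.log ((∑ τ' ∈ Tauset, h k τ' * s k (t - τ')) / s k (t - τ)))
        = y k t * Real.log (∑ τ ∈ Tauset, h k τ * s k (t - τ)) := by
      intro k hk t ht
      have hA := hconv k hk t ht
      have step1 : ∀ τ ∈ Tauset,
          (y k t * h k τ * s k (t - τ) / (∑ τ' ∈ Tauset, h k τ' * s k (t - τ'))) *
            Real.log (s k (t - τ))
          + (y k t * h k τ * s k (t - τ) / (∑ τ' ∈ Tauset, h k τ' * s k (t - τ'))) *
            Real.log ((∑ τ' ∈ Tauset, h k τ' * s k (t - τ')) / s k (t - τ))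
          = (h k τ * s k (t - τ)) *
              (y k t / (∑ τ' ∈ Tauset, h k τ' * s k (t - τ')) *
                Real.log (∑ τ' ∈ Tauset, h k τ' * s k (t - τ'))) := by
        intro τ hτ
        by_cases hmem : t - τ ∈ Tset
        · have hsp := hs k hk _ hmem
          rw [Real.log_div hA.ne' hsp.ne']
          ring
        · simp [hspad k _ hmem]
      rw [← Finset.sum_add_distrib, Finset.sum_congr rfl step1, ← Finset.sum_mul]
      field_simp
      try ring
    have hmain : (∑ k ∈ Kset, ∑ t ∈ Tset, ∑ τ ∈ Tauset,
          (y k t * h k τ * s k (t - τ) / (∑ τ' ∈ Tauset, h k τ' * s k (t - τ'))) *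
            Real.log (s k (t - τ)))
        + (∑ k ∈ Kset, ∑ t ∈ Tset, ∑ τ ∈ Tauset,
          (y k t * h k τ * s k (t - τ) / (∑ τ' ∈ Tauset, h k τ' * s k (t - τ'))) *
            Real.log ((∑ τ' ∈ Tauset, h k τ' * s k (t - τ')) / s k (t - τ)))
        = ∑ k ∈ Kset, ∑ t ∈ Tset,
            y k t * Real.log (∑ τ ∈ Tauset, h k τ * s k (t - τ)) := by
      rw [← Finset.sum_add_distrib]
      apply Finset.sum_congr rfl
      intro k hk
      rw [← Finset.sum_add_distrib]
      exact Finset.sum_congr rfl (fun t ht => hkey k hk t ht)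
    have hfin := congrArg (fun x => (1 - ρ) * x) hmain
    simp only [mul_add] at hfin
    linarith
end

section
/- Fix λ ≥ 0, finite index sets for k, t, τ, strictly positive data y(k,t), strictly positive s(k,t) (zero-padding convention for out-of-range time indices), and strictly positive current h(k,τ), with ỹ(k,t) = ∑_τ h(k,τ)·s(k,t−τ) strictly positive for all (k,t). Define Q(h) = ∑_{k,t} KL( y(k,t) | ∑_τ h(k,τ)·s(k,t−τ) ) + λ·∑_{k,t} s(k,t), and define the multiplicative update h'(k,τ) = h(k,τ) · ( ∑_t y(k,t)·s(k,t−τ)/ỹ(k,t) ) / ( ∑_t s(k,t−τ) ), assuming each denominator ∑_t s(k,t−τ) is strictly positive. Then Q(h') ≤ Q(h). (Monotonic non-increase of the regularized N-CTF cost (9) under the h-update rule (10).) -/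
open Finset Real

/-- Elementary inequality: for `a, b > 0`, `a - b ≤ a * log (a / b)`. -/
lemma nctf_klog_aux {a b : ℝ} (ha : 0 < a) (hb : 0 < b) :
    a - b ≤ a * Real.log (a / b) := by
  have h1 : Real.log (b / a) ≤ b / a - 1 := Real.log_le_sub_one_of_pos (by positivity)
  have h2 : Real.log (b / a) = - Real.log (a / b) := by
    rw [← Real.log_inv]
    congr 1
    field_simp
  rw [h2] at h1
  have h3 := mul_le_mul_of_nonneg_left h1 ha.le
  have h4 : a * (b / a - 1) = b - a := by field_simp
  nlinarith [h3, h4]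

/-- Per-`k` version of the monotonicity statement. -/
lemma nctf_per_k (Tset Tauset : Finset ℤ) (y s h h' : ℤ → ℝ)
    (hy : ∀ t ∈ Tset, 0 < y t)
    (hs : ∀ t ∈ Tset, 0 < s t)
    (hspad : ∀ t : ℤ, t ∉ Tset → s t = 0)
    (hh : ∀ τ ∈ Tauset, 0 < h τ)
    (hconv : ∀ t ∈ Tset, 0 < ∑ τ ∈ Tauset, h τ * s (t - τ))
    (hden : ∀ τ ∈ Tauset, 0 < ∑ t ∈ Tset, s (t - τ))
    (hh' : ∀ τ ∈ Tauset, h' τ =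
      h τ * (∑ t ∈ Tset, y t * s (t - τ) / (∑ τ' ∈ Tauset, h τ' * s (t - τ'))) /
        (∑ t ∈ Tset, s (t - τ))) :
    ∑ t ∈ Tset, (y t * Real.log (y t / (∑ τ ∈ Tauset, h' τ * s (t - τ)))
        + (∑ τ ∈ Tauset, h' τ * s (t - τ)) - y t)
    ≤ ∑ t ∈ Tset, (y t * Real.log (y t / (∑ τ ∈ Tauset, h τ * s (t - τ)))
        + (∑ τ ∈ Tauset, h τ * s (t - τ)) - y t) := by
  have sge : ∀ u : ℤ, 0 ≤ s u := by
    intro u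
    by_cases hu : u ∈ Tset
    · exact (hs u hu).le
    · simp [hspad u hu]
  -- positivity of the numerator sums A τ
  have hApos : ∀ τ ∈ Tauset,
      0 < ∑ t ∈ Tset, y t * s (t - τ) / (∑ τ' ∈ Tauset, h τ' * s (t - τ')) := by
    intro τ hτ
    obtain ⟨t0, ht0, hst0⟩ : ∃ t ∈ Tset, 0 < s (t - τ) := by
      by_contra hcon
      push_neg at hcon
      have : ∑ t ∈ Tset, s (t - τ) = 0 :=
        Finset.sum_eq_zero fun t ht => le_antisymm (hcon t ht) (sge _)
      exact absurd this (hden τ hτ).ne'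
    refine Finset.sum_pos' (fun t ht => ?_) ⟨t0, ht0, ?_⟩
    · exact div_nonneg (mul_nonneg (hy t ht).le (sge _)) (hconv t ht).le
    · exact div_pos (mul_pos (hy t0 ht0) hst0) (hconv t0 ht0)
  have hh'pos : ∀ τ ∈ Tauset, 0 < h' τ := by
    intro τ hτ
    rw [hh' τ hτ]
    exact div_pos (mul_pos (hh τ hτ) (hApos τ hτ)) (hden τ hτ)
  have hY'pos : ∀ t ∈ Tset, 0 < ∑ τ ∈ Tauset, h' τ * s (t - τ) := by
    intro t ht
    obtain ⟨τ0, hτ0, hsτ0⟩ : ∃ τ ∈ Tauset, 0 < s (t - τ) := by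
      by_contra hcon
      push_neg at hcon
      have : ∑ τ ∈ Tauset, h τ * s (t - τ) = 0 :=
        Finset.sum_eq_zero fun τ hτ => by
          have : s (t - τ) = 0 := le_antisymm (hcon τ hτ) (sge _)
          simp [this]
      exact absurd this (hconv t ht).ne'
    exact Finset.sum_pos' (fun τ hτ => mul_nonneg (hh'pos τ hτ).le (sge _))
      ⟨τ0, hτ0, mul_pos (hh'pos τ0 hτ0) hsτ0⟩
  rw [← sub_nonpos, ← Finset.sum_sub_distrib]
  -- step 1: termwise majorization via Jensen
  have step1 : ∀ t ∈ Tset,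
      (y t * Real.log (y t / (∑ τ ∈ Tauset, h' τ * s (t - τ)))
          + (∑ τ ∈ Tauset, h' τ * s (t - τ)) - y t)
        - (y t * Real.log (y t / (∑ τ ∈ Tauset, h τ * s (t - τ)))
          + (∑ τ ∈ Tauset, h τ * s (t - τ)) - y t)
      ≤ ∑ τ ∈ Tauset,
          (-(y t * (h τ * s (t - τ)) / (∑ τ' ∈ Tauset, h τ' * s (t - τ')))
              * Real.log (h' τ / h τ)
            + (h' τ - h τ) * s (t - τ)) := by
    intro t ht
    set Y := ∑ τ ∈ Tauset, h τ * s (t - τ) with hYdef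
    set Y' := ∑ τ ∈ Tauset, h' τ * s (t - τ) with hY'def
    have hYp : 0 < Y := hconv t ht
    have hY'p : 0 < Y' := hY'pos t ht
    have hyt : 0 < y t := hy t ht
    -- Jensen's inequality
    have hw1 : ∑ τ ∈ Tauset, h τ * s (t - τ) / Y = 1 := by
      rw [← Finset.sum_div, ← hYdef, div_self hYp.ne']
    have jensen :
        ∑ τ ∈ Tauset, (h τ * s (t - τ) / Y) • Real.log (h' τ / h τ)
          ≤ Real.log (∑ τ ∈ Tauset, (h τ * s (t - τ) / Y) • (h' τ / h τ)) := by
      apply (strictConcaveOn_log_Ioi.concaveOn).le_map_sum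
      · intro τ hτ
        exact div_nonneg (mul_nonneg (hh τ hτ).le (sge _)) hYp.le
      · exact hw1
      · intro τ hτ
        exact Set.mem_Ioi.mpr (div_pos (hh'pos τ hτ) (hh τ hτ))
    have hpt : ∑ τ ∈ Tauset, (h τ * s (t - τ) / Y) • (h' τ / h τ) = Y' / Y := by
      rw [hY'def, Finset.sum_div]
      apply Finset.sum_congr rfl
      intro τ hτ
      have hhne := (hh τ hτ).ne'
      simp only [smul_eq_mul]
      field_simp
    rw [hpt, Real.log_div hY'p.ne' hYp.ne'] at jensen
    simp only [smul_eq_mul] at jensen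
    have key : y t * (Real.log Y - Real.log Y')
        ≤ ∑ τ ∈ Tauset,
            (-(y t * (h τ * s (t - τ)) / Y) * Real.log (h' τ / h τ)) := by
      have h5 := mul_le_mul_of_nonneg_left jensen hyt.le
      have h6 : y t * ∑ τ ∈ Tauset, h τ * s (t - τ) / Y * Real.log (h' τ / h τ)
          = -∑ τ ∈ Tauset, (-(y t * (h τ * s (t - τ)) / Y) * Real.log (h' τ / h τ)) := by
        rw [Finset.mul_sum, ← Finset.sum_neg_distrib]
        apply Finset.sum_congr rfl
        intro τ hτ
        ring
      rw [h6] at h5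
      linarith
    have hYdiff : Y' - Y = ∑ τ ∈ Tauset, (h' τ - h τ) * s (t - τ) := by
      rw [hY'def, hYdef, ← Finset.sum_sub_distrib]
      apply Finset.sum_congr rfl
      intro τ hτ
      ring
    have hlogdiff :
        y t * Real.log (y t / Y') - y t * Real.log (y t / Y)
          = y t * (Real.log Y - Real.log Y') := by
      rw [Real.log_div hyt.ne' hY'p.ne', Real.log_div hyt.ne' hYp.ne']
      ring
    calc (y t * Real.log (y t / Y') + Y' - y t)
          - (y t * Real.log (y t / Y) + Y - y t)
        = y t * (Real.log Y - Real.log Y') + (Y' - Y) := by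
          rw [← hlogdiff]; ring
      _ ≤ (∑ τ ∈ Tauset,
            (-(y t * (h τ * s (t - τ)) / Y) * Real.log (h' τ / h τ)))
          + ∑ τ ∈ Tauset, (h' τ - h τ) * s (t - τ) := by
          rw [hYdiff]
          exact add_le_add_left key _
      _ = ∑ τ ∈ Tauset,
            (-(y t * (h τ * s (t - τ)) / Y) * Real.log (h' τ / h τ)
              + (h' τ - h τ) * s (t - τ)) := by
          rw [Finset.sum_add_distrib]
  refine le_trans (Finset.sum_le_sum step1) ?_
  rw [Finset.sum_comm]
  -- step 2: each τ contributes a nonpositive amount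
  apply Finset.sum_nonpos
  intro τ hτ
  set a := ∑ t ∈ Tset, y t * s (t - τ) / (∑ τ' ∈ Tauset, h τ' * s (t - τ')) with hadef
  set b := ∑ t ∈ Tset, s (t - τ) with hbdef
  have hap : 0 < a := hApos τ hτ
  have hbp : 0 < b := hden τ hτ
  have hhp : 0 < h τ := hh τ hτ
  have hh'eq : h' τ = h τ * a / b := hh' τ hτ
  have hlog : Real.log (h' τ / h τ) = Real.log (a / b) := by
    rw [hh'eq]
    congr 1
    field_simp
  have hsum_eq : ∑ t ∈ Tset,
      (-(y t * (h τ * s (t - τ)) / (∑ τ' ∈ Tauset, h τ' * s (t - τ')))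
          * Real.log (h' τ / h τ)
        + (h' τ - h τ) * s (t - τ))
      = -(h τ * Real.log (a / b)) * a + (h' τ - h τ) * b := by
    rw [Finset.sum_add_distrib, hadef, hbdef, Finset.mul_sum, Finset.mul_sum]
    congr 1
    apply Finset.sum_congr rfl
    intro t ht
    rw [hlog]
    ring
  rw [hsum_eq, hh'eq]
  have hkey : a - b ≤ a * Real.log (a / b) := nctf_klog_aux hap hbp
  have hexp : (h τ * a / b - h τ) * b = h τ * (a - b) := by field_simp
  rw [hexp]
  nlinarith [hkey, hhp.le]


/-- Monotonic non-increase of the regularized N-CTF cost (9) under the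
multiplicative `h`-update rule (10):
`h'(k,τ) = h(k,τ) (∑_t y(k,t) s(k,t−τ)/ỹ(k,t)) / (∑_t s(k,t−τ))` satisfies
`Q(h') ≤ Q(h)`, where `ỹ(k,t) = ∑_τ h(k,τ) s(k,t−τ)` and
`Q(h) = ∑_{k,t} KL(y(k,t) | ∑_τ h(k,τ) s(k,t−τ)) + λ ∑_{k,t} s(k,t)`. -/
theorem nctf_h_update_nonincreasing {κ : Type*} (Kset : Finset κ)
    (Tset Tauset : Finset ℤ)
    (lam : ℝ) (hlam : 0 ≤ lam)
    (y s h : κ → ℤ → ℝ)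
    (hy : ∀ k ∈ Kset, ∀ t ∈ Tset, 0 < y k t)
    (hs : ∀ k ∈ Kset, ∀ t ∈ Tset, 0 < s k t)
    (hspad : ∀ k, ∀ t : ℤ, t ∉ Tset → s k t = 0)
    (hh : ∀ k ∈ Kset, ∀ τ ∈ Tauset, 0 < h k τ)
    (hconv : ∀ k ∈ Kset, ∀ t ∈ Tset, 0 < ∑ τ ∈ Tauset, h k τ * s k (t - τ))
    (hden : ∀ k ∈ Kset, ∀ τ ∈ Tauset, 0 < ∑ t ∈ Tset, s k (t - τ))
    (Q : (κ → ℤ → ℝ) → ℝ)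
    (hQ : ∀ g : κ → ℤ → ℝ, Q g =
      (∑ k ∈ Kset, ∑ t ∈ Tset,
        (y k t * Real.log (y k t / (∑ τ ∈ Tauset, g k τ * s k (t - τ)))
          + (∑ τ ∈ Tauset, g k τ * s k (t - τ)) - y k t))
      + lam * ∑ k ∈ Kset, ∑ t ∈ Tset, s k t)
    (h' : κ → ℤ → ℝ)
    (hh' : ∀ k ∈ Kset, ∀ τ ∈ Tauset, h' k τ =
      h k τ * (∑ t ∈ Tset, y k t * s k (t - τ) /
          (∑ τ' ∈ Tauset, h k τ' * s k (t - τ')))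
        / (∑ t ∈ Tset, s k (t - τ))) :
    Q h' ≤ Q h := by 
  rw [hQ h', hQ h]
  apply add_le_add_left
  apply Finset.sum_le_sum
  intro k hk
  exact nctf_per_k Tset Tauset (y k) (s k) (h k) (h' k)
    (hy k hk) (hs k hk) (hspad k) (hh k hk) (hconv k hk) (hden k hk) (hh' k hk)
end
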